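/- Assume in addition that A is continuously differentiable. There exists a constant C > 0, depending only on n, α, κ and A, and independent of ε_1, …, ε_n and of the choice of mesh, such that for any mesh points 0 = x_0 < x_1 < … < x_N = 1, each i, 1 ≤ i ≤ n, and each j, 1 ≤ j ≤ N−1: ε_i · |δ²w^l_i(x_j) − (w^l_i)''(x_j)| ≤ C · B^l_n(x_{j−1}). -/

import Mathlib

open Set Filter Topology

noncomputable def Bl (α e x : ℝ) : ℝ := Real.exp (-x * Real.sqrt (α / e))

noncomputable def Lop (n : ℕ) (ε : ℕ → ℝ) (A : ℝ → ℕ → ℕ → ℝ)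
    (ψ : ℝ → ℕ → ℝ) (x : ℝ) (i : ℕ) : ℝ :=
  -(ε i) * iteratedDeriv 2 (fun t => ψ t i) x + ∑ j ∈ Finset.Icc 1 n, A x i j * ψ x j

noncomputable def d2f (x : ℕ → ℝ) (g : ℝ → ℝ) (j : ℕ) : ℝ :=
  ((g (x (j+1)) - g (x j)) / (x (j+1) - x j) - (g (x j) - g (x (j-1))) / (x j - x (j-1)))
    / (((x j - x (j-1)) + (x (j+1) - x j)) / 2)

lemma diffs3 {f : ℝ → ℝ} (hf : ContDiff ℝ 3 f) :
    Differentiable ℝ f ∧ Differentiable ℝ (deriv f) := by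
  have hf' : ContDiff ℝ ((2:ℕ∞)+1) f := hf.of_le (by norm_num)
  rw [contDiff_succ_iff_deriv] at hf'
  have hf'' : ContDiff ℝ ((1:ℕ∞)+1) (deriv f) := hf'.2.2.of_le (by norm_num)
  rw [contDiff_succ_iff_deriv] at hf''
  exact ⟨hf'.1, hf''.1⟩

lemma sd_test {f : ℝ → ℝ} (hf : ContDiff ℝ 3 f) {x : ℝ} (h : IsLocalMin f x) :
    0 ≤ deriv (deriv f) x := by
  by_contra hneg
  push_neg at hneg
  obtain ⟨hf1, hf2⟩ := diffs3 hf
  have hd0 : deriv f x = 0 := h.deriv_eq_zero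
  have hda : HasDerivAt (deriv f) (deriv (deriv f) x) x := (hf2 x).hasDerivAt
  have hsl : Tendsto (slope (deriv f) x) (𝓝[≠] x) (𝓝 (deriv (deriv f) x)) :=
    hasDerivAt_iff_tendsto_slope.mp hda
  have hev : ∀ᶠ y in 𝓝[≠] x, slope (deriv f) x y < 0 :=
    hsl.eventually_lt_const hneg
  rw [eventually_nhdsWithin_iff, Metric.eventually_nhds_iff] at hev
  obtain ⟨δ₁, hδ₁, H1⟩ := hev
  obtain ⟨δ₂, hδ₂, H2⟩ := Metric.eventually_nhds_iff.mp h
  obtain ⟨m, hm0, hm1, hm2⟩ : ∃ m, 0 < m ∧ m ≤ δ₁ ∧ m ≤ δ₂ :=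
    ⟨min δ₁ δ₂, lt_min hδ₁ hδ₂, min_le_left _ _, min_le_right _ _⟩
  obtain ⟨y, hyx⟩ : ∃ y : ℝ, y = x + m / 2 := ⟨_, rfl⟩
  have hxy : x < y := by linarith
  have hfy : f x ≤ f y := by
    apply H2; rw [Real.dist_eq, abs_of_pos (by linarith)]; linarith
  have hneg' : ∀ z, x < z → z ≤ y → deriv f z < 0 := by
    intro z hz1 hz2
    have hd : dist z x < δ₁ := by
      rw [Real.dist_eq, abs_of_pos (by linarith)]; linarith
    have hs := H1 hd (by simp; intro hc; rw [hc] at hz1; exact absurd hz1 (lt_irrefl _))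
    rw [slope_def_field, hd0] at hs
    rcases div_neg_iff.mp hs with ⟨_, hb⟩ | ⟨ha, _⟩
    · linarith
    · linarith
  obtain ⟨c, hc, hc2⟩ := exists_deriv_eq_slope f hxy (hf1.continuous.continuousOn)
    (hf1.differentiableOn)
  have h1 := hneg' c hc.1 (le_of_lt hc.2)
  rw [hc2] at h1
  have : 0 ≤ (f y - f x) / (y - x) := div_nonneg (by linarith) (by linarith)
  linarith

lemma itd2 (f : ℝ → ℝ) : iteratedDeriv 2 f = deriv (deriv f) := by
  have : (2:ℕ) = 1 + 1 := by norm_num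
  rw [this, iteratedDeriv_succ, iteratedDeriv_one]

lemma maxprin (n : ℕ) (hn : 1 ≤ n) (A : ℝ → ℕ → ℕ → ℝ) (α : ℝ) (hα0 : 0 < α)
    (hAoff : ∀ x ∈ Set.Icc (0:ℝ) 1, ∀ i j, 1 ≤ i → i ≤ n → 1 ≤ j → j ≤ n → i ≠ j → A x i j ≤ 0)
    (hα : ∀ x ∈ Set.Icc (0:ℝ) 1, ∀ i, 1 ≤ i → i ≤ n → α < ∑ j ∈ Finset.Icc 1 n, A x i j)
    (ε : ℕ → ℝ) (hε : ∀ i, 1 ≤ i → i ≤ n → 0 < ε i)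
    (ψ : ℝ → ℕ → ℝ)
    (hψ : ∀ i, 1 ≤ i → i ≤ n → ContDiff ℝ 3 (fun t => ψ t i))
    (hL : ∀ y ∈ Set.Ioo (0:ℝ) 1, ∀ i, 1 ≤ i → i ≤ n → 0 ≤ Lop n ε A ψ y i)
    (h0 : ∀ i, 1 ≤ i → i ≤ n → 0 ≤ ψ 0 i)
    (h1 : ∀ i, 1 ≤ i → i ≤ n → 0 ≤ ψ 1 i) :
    ∀ y ∈ Set.Icc (0:ℝ) 1, ∀ i, 1 ≤ i → i ≤ n → 0 ≤ ψ y i := by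
  have hminex : ∀ i ∈ Finset.Icc 1 n, ∃ z ∈ Set.Icc (0:ℝ) 1,
      IsMinOn (fun t => ψ t i) (Set.Icc 0 1) z := by
    intro i hi
    rw [Finset.mem_Icc] at hi
    exact isCompact_Icc.exists_isMinOn ⟨0, by norm_num⟩
      ((hψ i hi.1 hi.2).continuous.continuousOn)
  choose! z hz hzmin using hminex
  obtain ⟨i0, hi0, hi0min⟩ := Finset.exists_min_image (Finset.Icc 1 n)
    (fun i => ψ (z i) i) ⟨1, by simp [hn]⟩
  set m := ψ (z i0) i0 with hm
  have hm_le : ∀ yy ∈ Set.Icc (0:ℝ) 1, ∀ j ∈ Finset.Icc 1 n, m ≤ ψ yy j := by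
    intro yy hyy j hj
    exact le_trans (hi0min j hj) (isMinOn_iff.mp (hzmin j hj) yy hyy)
  by_contra hcon
  push_neg at hcon
  obtain ⟨y0, hy0, i1, h11, h1n, hneg⟩ := hcon
  have hmneg : m < 0 :=
    lt_of_le_of_lt (hm_le y0 hy0 i1 (Finset.mem_Icc.mpr ⟨h11, h1n⟩)) hneg
  rw [Finset.mem_Icc] at hi0
  have hzi0 : z i0 ∈ Set.Icc (0:ℝ) 1 := hz i0 (Finset.mem_Icc.mpr hi0)
  have hne0 : z i0 ≠ 0 := by
    intro hc; rw [hm, hc] at hmneg; exact absurd (h0 i0 hi0.1 hi0.2) (not_le.mpr hmneg)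
  have hne1 : z i0 ≠ 1 := by
    intro hc; rw [hm, hc] at hmneg; exact absurd (h1 i0 hi0.1 hi0.2) (not_le.mpr hmneg)
  have hio : z i0 ∈ Set.Ioo (0:ℝ) 1 :=
    ⟨lt_of_le_of_ne hzi0.1 (Ne.symm hne0), lt_of_le_of_ne hzi0.2 hne1⟩
  have hloc : IsLocalMin (fun t => ψ t i0) (z i0) :=
    (hzmin i0 (Finset.mem_Icc.mpr hi0)).isLocalMin (Icc_mem_nhds hio.1 hio.2)
  have hdd : 0 ≤ deriv (deriv (fun t => ψ t i0)) (z i0) :=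
    sd_test (hψ i0 hi0.1 hi0.2) hloc
  have hLv := hL (z i0) hio i0 hi0.1 hi0.2
  rw [Lop, itd2] at hLv
  have hsum : ∑ j ∈ Finset.Icc 1 n, A (z i0) i0 j * ψ (z i0) j ≤
      (∑ j ∈ Finset.Icc 1 n, A (z i0) i0 j) * m := by
    rw [← Finset.add_sum_erase _ _ (Finset.mem_Icc.mpr hi0),
        ← Finset.add_sum_erase _ (fun j => A (z i0) i0 j) (Finset.mem_Icc.mpr hi0),
        add_mul, Finset.sum_mul]
    apply add_le_add (le_of_eq rfl)
    apply Finset.sum_le_sum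
    intro j hj
    have hjm := Finset.mem_erase.mp hj
    have hjIcc := Finset.mem_Icc.mp hjm.2
    have hA := hAoff (z i0) hzi0 i0 j hi0.1 hi0.2 hjIcc.1 hjIcc.2 (Ne.symm hjm.1)
    have hmj : m ≤ ψ (z i0) j := hm_le (z i0) hzi0 j hjm.2
    exact mul_le_mul_of_nonpos_left hmj hA
  have hfin : (∑ j ∈ Finset.Icc 1 n, A (z i0) i0 j) * m < α * m :=
    mul_lt_mul_of_neg_right (hα (z i0) hzi0 i0 hi0.1 hi0.2) hmneg
  have hαm : α * m < 0 := mul_neg_of_pos_of_neg hα0 hmneg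
  have hεdd : 0 ≤ ε i0 * deriv (deriv fun t => ψ t i0) (z i0) :=
    mul_nonneg (le_of_lt (hε i0 hi0.1 hi0.2)) hdd
  linarith

lemma layer (n : ℕ) (hn : 1 ≤ n) (A : ℝ → ℕ → ℕ → ℝ) (α : ℝ) (hα0 : 0 < α)
    (hAoff : ∀ x ∈ Set.Icc (0:ℝ) 1, ∀ i j, 1 ≤ i → i ≤ n → 1 ≤ j → j ≤ n → i ≠ j → A x i j ≤ 0)
    (hα : ∀ x ∈ Set.Icc (0:ℝ) 1, ∀ i, 1 ≤ i → i ≤ n → α < ∑ j ∈ Finset.Icc 1 n, A x i j)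
    (ε : ℕ → ℝ) (hε : ∀ i, 1 ≤ i → i ≤ n → 0 < ε i)
    (hεtop : ∀ i, 1 ≤ i → i ≤ n → ε i ≤ ε n)
    (κ : ℝ) (hκ : 0 < κ)
    (w : ℝ → ℕ → ℝ)
    (hw : ∀ i, 1 ≤ i → i ≤ n → ContDiff ℝ 3 (fun t => w t i))
    (hLw : ∀ y ∈ Set.Ioo (0:ℝ) 1, ∀ i, 1 ≤ i → i ≤ n → Lop n ε A w y i = 0)
    (hw1 : ∀ i, 1 ≤ i → i ≤ n → w 1 i = 0)
    (hw0 : ∀ i, 1 ≤ i → i ≤ n → |w 0 i| ≤ κ) :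
    ∀ y ∈ Set.Icc (0:ℝ) 1, ∀ k, 1 ≤ k → k ≤ n →
      |w y k| ≤ κ * Real.exp (-y * Real.sqrt (α / ε n)) := by
  have hεn : 0 < ε n := hε n hn le_rfl
  set s := Real.sqrt (α / ε n) with hsdef
  have hs2 : s^2 = α / ε n := Real.sq_sqrt (by positivity)
  have hlin : ∀ t : ℝ, HasDerivAt (fun u : ℝ => -u * s) (-s) t := by
    intro t; simpa using ((hasDerivAt_id t).neg.mul_const s)
  have hΦha : ∀ t : ℝ, HasDerivAt (fun u : ℝ => κ * Real.exp (-u * s))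
      (κ * (Real.exp (-t * s) * -s)) t := fun t => ((hlin t).exp).const_mul κ
  have hΦha2 : ∀ t : ℝ, HasDerivAt (fun u : ℝ => κ * (Real.exp (-u * s) * -s))
      (κ * (Real.exp (-t * s) * -s * -s)) t := fun t => (((hlin t).exp).mul_const (-s)).const_mul κ
  have main : ∀ σ : ℝ, σ = 1 ∨ σ = -1 → ∀ y ∈ Set.Icc (0:ℝ) 1, ∀ k, 1 ≤ k → k ≤ n →
      0 ≤ κ * Real.exp (-y * s) + σ * w y k := by
    intro σ hσ
    apply maxprin n hn A α hα0 hAoff hα ε hε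
    · intro i h1 h2
      exact (contDiff_const.mul ((contDiff_id.neg.mul contDiff_const).exp)).add
        (contDiff_const.mul (hw i h1 h2))
    · intro y hy i h1 h2
      have hy' : y ∈ Set.Icc (0:ℝ) 1 := ⟨hy.1.le, hy.2.le⟩
      have hwd := diffs3 (hw i h1 h2)
      have e1 : deriv (fun t => κ * Real.exp (-t * s) + σ * w t i)
          = fun t => κ * (Real.exp (-t * s) * -s) + σ * deriv (fun u => w u i) t := by
        funext t
        rw [deriv_fun_add ((hΦha t).differentiableAt) ((hwd.1 t).const_mul σ),
          (hΦha t).deriv, deriv_const_mul σ (hwd.1 t)]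
      have e2 : deriv (deriv (fun t => κ * Real.exp (-t * s) + σ * w t i)) y
          = κ * (Real.exp (-y * s) * -s * -s) + σ * deriv (deriv (fun u => w u i)) y := by
        rw [e1, deriv_fun_add ((hΦha2 y).differentiableAt) ((hwd.2 y).const_mul σ),
          (hΦha2 y).deriv, deriv_const_mul σ (hwd.2 y)]
      have hLw0 := hLw y hy i h1 h2
      rw [Lop, itd2] at hLw0
      have hsub : ∑ j ∈ Finset.Icc 1 n, A y i j * w y j
          = ε i * deriv (deriv (fun u => w u i)) y := by linarith
      simp only [Lop, itd2]
      rw [e2]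
      have e3 : ∑ j ∈ Finset.Icc 1 n, A y i j * (κ * Real.exp (-y * s) + σ * w y j)
          = (∑ j ∈ Finset.Icc 1 n, A y i j) * (κ * Real.exp (-y * s))
            + σ * ∑ j ∈ Finset.Icc 1 n, A y i j * w y j := by
        rw [Finset.sum_mul, Finset.mul_sum, ← Finset.sum_add_distrib]
        exact Finset.sum_congr rfl (fun j _ => by ring)
      rw [e3, hsub]
      have hee : (0:ℝ) < κ * Real.exp (-y * s) := by positivity
      have h6 : ε i * s^2 ≤ α := by
        rw [hs2, ← mul_div_assoc, div_le_iff₀ hεn]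
        nlinarith [hεtop i h1 h2]
      have h7 := hα y hy' i h1 h2
      have h8 : ε i * s^2 * (κ * Real.exp (-y * s)) ≤ α * (κ * Real.exp (-y * s)) :=
        mul_le_mul_of_nonneg_right h6 hee.le
      have h9 : α * (κ * Real.exp (-y * s))
          ≤ (∑ j ∈ Finset.Icc 1 n, A y i j) * (κ * Real.exp (-y * s)) :=
        mul_le_mul_of_nonneg_right h7.le hee.le
      nlinarith [h8, h9]
    · intro i h1 h2
      have := abs_le.mp (hw0 i h1 h2)
      have he : Real.exp (-(0:ℝ) * s) = 1 := by norm_num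
      rw [he]
      rcases hσ with h | h <;> subst h <;> nlinarith [this.1, this.2]
    · intro i h1 h2
      rw [hw1 i h1 h2]
      have : (0:ℝ) ≤ κ * Real.exp (-(1:ℝ) * s) := by positivity
      linarith
  intro y hy k hk1 hkn
  have p1 := main 1 (Or.inl rfl) y hy k hk1 hkn
  have p2 := main (-1) (Or.inr rfl) y hy k hk1 hkn
  rw [abs_le]
  constructor <;> nlinarith [p1, p2]

lemma mono_aux (x : ℕ → ℝ) (N : ℕ) (h : ∀ j, j < N → x j < x (j+1)) :
    ∀ a b, a < b → b ≤ N → x a < x b := by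
  intro a b hab hbN
  induction b with
  | zero => omega
  | succ k ih =>
    rcases Nat.lt_succ_iff_lt_or_eq.mp hab with h' | h'
    · exact lt_trans (ih h' (by omega)) (h k (by omega))
    · subst h'; exact h a (by omega)

lemma trunc {g : ℝ → ℝ} (hg : ContDiff ℝ 3 g) {a b c : ℝ} (hab : a < b) (hbc : b < c) :
    ∃ η ∈ Set.Ioo a c,
      |((g c - g b) / (c - b) - (g b - g a) / (b - a)) / (((b - a) + (c - b)) / 2)|
        ≤ 2 * |deriv (deriv g) η| := by
  obtain ⟨hg1, hg2⟩ := diffs3 hg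
  obtain ⟨ξp, hξp, hsp⟩ := exists_deriv_eq_slope g hbc hg1.continuous.continuousOn
    hg1.differentiableOn
  obtain ⟨ξm, hξm, hsm⟩ := exists_deriv_eq_slope g hab hg1.continuous.continuousOn
    hg1.differentiableOn
  have hξ : ξm < ξp := lt_trans hξm.2 hξp.1
  obtain ⟨η, hη, hsd⟩ := exists_deriv_eq_slope (deriv g) hξ hg2.continuous.continuousOn
    hg2.differentiableOn
  refine ⟨η, ⟨lt_trans hξm.1 hη.1, lt_trans hη.2 hξp.2⟩, ?_⟩
  have hne : ξp - ξm ≠ 0 := by linarith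
  have hnum : (g c - g b) / (c - b) - (g b - g a) / (b - a)
      = deriv (deriv g) η * (ξp - ξm) := by
    rw [← hsp, ← hsm, hsd]; field_simp
  have hden : (b - a) + (c - b) = c - a := by ring
  rw [hnum, hden, abs_div, abs_mul, abs_of_pos (show (0:ℝ) < ξp - ξm by linarith),
    abs_of_pos (show (0:ℝ) < (c - a)/2 by linarith), mul_div_assoc]
  have hq : (ξp - ξm) / ((c - a) / 2) ≤ 2 := by
    rw [div_le_iff₀ (by linarith)]
    have := hξp.2; have := hξm.1; linarith
  calc |deriv (deriv g) η| * ((ξp - ξm) / ((c - a) / 2))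
      ≤ |deriv (deriv g) η| * 2 := mul_le_mul_of_nonneg_left hq (abs_nonneg _)
    _ = 2 * |deriv (deriv g) η| := by ring

theorem stmt16
    (n : ℕ) (hn : 1 ≤ n)
    (A : ℝ → ℕ → ℕ → ℝ)
    (hAc : ∀ i j, 1 ≤ i → i ≤ n → 1 ≤ j → j ≤ n →
      ContinuousOn (fun x => A x i j) (Set.Icc 0 1))
    (hAsm : ∀ i j, 1 ≤ i → i ≤ n → 1 ≤ j → j ≤ n → ContDiff ℝ 1 (fun x => A x i j))
    (hAdiag : ∀ x ∈ Set.Icc (0:ℝ) 1, ∀ i, 1 ≤ i → i ≤ n →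
      ∑ j ∈ (Finset.Icc 1 n).erase i, |A x i j| < A x i i)
    (hAoff : ∀ x ∈ Set.Icc (0:ℝ) 1, ∀ i j, 1 ≤ i → i ≤ n → 1 ≤ j → j ≤ n → i ≠ j → A x i j ≤ 0)
    (α : ℝ) (hα0 : 0 < α)
    (hα : ∀ x ∈ Set.Icc (0:ℝ) 1, ∀ i, 1 ≤ i → i ≤ n → α < ∑ j ∈ Finset.Icc 1 n, A x i j)
    (κ : ℝ) (hκ : 0 < κ) :
    ∃ C > 0,
      ∀ ε : ℕ → ℝ,
      (∀ i, 1 ≤ i → i ≤ n → 0 < ε i) →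
      (∀ i, 1 ≤ i → i ≤ n → ε i ≤ 1) →
      (∀ i j, 1 ≤ i → i < j → j ≤ n → ε i < ε j) →
      (∀ i, 1 ≤ i → i ≤ n → Real.sqrt (ε i) ≤ Real.sqrt α / 4) →
      ∀ w : ℝ → ℕ → ℝ,
      (∀ i, 1 ≤ i → i ≤ n → ContDiff ℝ 3 (fun t => w t i)) →
      (∀ y ∈ Set.Ioo (0:ℝ) 1, ∀ i, 1 ≤ i → i ≤ n → Lop n ε A w y i = 0) →
      (∀ i, 1 ≤ i → i ≤ n → w 1 i = 0) →
      (∀ i, 1 ≤ i → i ≤ n → |w 0 i| ≤ κ) →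
      ∀ N : ℕ, ∀ x : ℕ → ℝ,
      x 0 = 0 → x N = 1 → (∀ j, j < N → x j < x (j+1)) →
      ∀ i, 1 ≤ i → i ≤ n → ∀ j, 1 ≤ j → j ≤ N - 1 →
        ε i * |d2f x (fun t => w t i) j - iteratedDeriv 2 (fun t => w t i) (x j)| ≤
          C * Bl α (ε n) (x (j-1)) := by
  classical
  have hFc : ContinuousOn (fun y => ∑ i ∈ Finset.Icc 1 n, ∑ j ∈ Finset.Icc 1 n, |A y i j|)
      (Set.Icc (0:ℝ) 1) := by
    apply continuousOn_finset_sum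
    intro i hi
    apply continuousOn_finset_sum
    intro j hj
    rw [Finset.mem_Icc] at hi hj
    exact (hAc i j hi.1 hi.2 hj.1 hj.2).abs
  obtain ⟨M, hM⟩ := isCompact_Icc.exists_bound_of_continuousOn hFc
  have hMb : ∀ y ∈ Set.Icc (0:ℝ) 1,
      (∑ i ∈ Finset.Icc 1 n, ∑ j ∈ Finset.Icc 1 n, |A y i j|) ≤ M := by
    intro y hy
    exact le_trans (le_abs_self _) (by simpa [Real.norm_eq_abs] using hM y hy)
  have hM0 : 0 ≤ M := by
    have h0 : (0:ℝ) ∈ Set.Icc (0:ℝ) 1 := by norm_num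
    have := hMb 0 h0
    have hpos : 0 ≤ ∑ i ∈ Finset.Icc 1 n, ∑ j ∈ Finset.Icc 1 n, |A (0:ℝ) i j| :=
      Finset.sum_nonneg fun i _ => Finset.sum_nonneg fun j _ => abs_nonneg _
    linarith
  refine ⟨3 * (M + 1) * κ, by nlinarith, ?_⟩
  intro ε hε hε1 hεmono hεα w hw hLw hw1 hw0 N x hx0 hxN hxm i hi1 hin j hj1 hjN
  have hN2 : 2 ≤ N := by omega
  have hεn : 0 < ε n := hε n hn le_rfl
  have hεtop : ∀ k, 1 ≤ k → k ≤ n → ε k ≤ ε n := by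
    intro k h1 h2
    rcases eq_or_lt_of_le h2 with h | h
    · rw [h]
    · exact (hεmono k n h1 h le_rfl).le
  have hWb := layer n hn A α hα0 hAoff hα ε hε hεtop κ hκ w hw hLw hw1 hw0
  set s := Real.sqrt (α / ε n) with hsdef
  have hs0 : 0 ≤ s := Real.sqrt_nonneg _
  have hεi : 0 < ε i := hε i hi1 hin
  have hW2 : ∀ y ∈ Set.Ioo (0:ℝ) 1,
      ε i * |deriv (deriv (fun t => w t i)) y| ≤ M * κ * Real.exp (-y * s) := by
    intro y hy
    have hy' : y ∈ Set.Icc (0:ℝ) 1 := ⟨hy.1.le, hy.2.le⟩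
    have hLw0 := hLw y hy i hi1 hin
    rw [Lop, itd2] at hLw0
    have hsub : ε i * deriv (deriv (fun t => w t i)) y
        = ∑ j' ∈ Finset.Icc 1 n, A y i j' * w y j' := by linarith
    rw [show ε i * |deriv (deriv (fun t => w t i)) y|
        = |ε i * deriv (deriv (fun t => w t i)) y| by
      rw [abs_mul, abs_of_pos hεi], hsub]
    calc |∑ j' ∈ Finset.Icc 1 n, A y i j' * w y j'|
        ≤ ∑ j' ∈ Finset.Icc 1 n, |A y i j' * w y j'| := Finset.abs_sum_le_sum_abs _ _
      _ ≤ ∑ j' ∈ Finset.Icc 1 n, |A y i j'| * (κ * Real.exp (-y * s)) := by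
          apply Finset.sum_le_sum
          intro j' hj'
          rw [Finset.mem_Icc] at hj'
          rw [abs_mul]
          exact mul_le_mul_of_nonneg_left (hWb y hy' j' hj'.1 hj'.2) (abs_nonneg _)
      _ = (∑ j' ∈ Finset.Icc 1 n, |A y i j'|) * (κ * Real.exp (-y * s)) := by
          rw [Finset.sum_mul]
      _ ≤ M * (κ * Real.exp (-y * s)) := by
          apply mul_le_mul_of_nonneg_right _ (by positivity)
          calc ∑ j' ∈ Finset.Icc 1 n, |A y i j'|
              ≤ ∑ i' ∈ Finset.Icc 1 n, ∑ j' ∈ Finset.Icc 1 n, |A y i' j'| :=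
                Finset.single_le_sum (f := fun i' => ∑ j' ∈ Finset.Icc 1 n, |A y i' j'|)
                  (fun i' _ => Finset.sum_nonneg fun _ _ => abs_nonneg _)
                  (Finset.mem_Icc.mpr ⟨hi1, hin⟩)
            _ ≤ M := hMb y hy'
      _ = M * κ * Real.exp (-y * s) := by ring
  have hj1' : j - 1 + 1 = j := by omega
  have hab : x (j-1) < x j := by
    have := hxm (j-1) (by omega); rwa [hj1'] at this
  have hbc : x j < x (j+1) := hxm j (by omega)
  have ha0 : 0 ≤ x (j-1) := by
    rcases Nat.eq_zero_or_pos (j-1) with h | h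
    · rw [h, hx0]
    · rw [← hx0]; exact (mono_aux x N hxm 0 (j-1) h (by omega)).le
  have hc1 : x (j+1) ≤ 1 := by
    rcases eq_or_lt_of_le (show j+1 ≤ N by omega) with h | h
    · rw [← hxN, h]
    · rw [← hxN]; exact (mono_aux x N hxm (j+1) N h le_rfl).le
  obtain ⟨η, hη, hE⟩ := trunc (hw i hi1 hin) hab hbc
  have hηI : η ∈ Set.Ioo (0:ℝ) 1 := ⟨lt_of_le_of_lt ha0 hη.1, lt_of_lt_of_le hη.2 hc1⟩
  have hbI : x j ∈ Set.Ioo (0:ℝ) 1 := ⟨lt_of_le_of_lt ha0 hab, lt_of_lt_of_le hbc hc1⟩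
  have hexpa : ∀ u : ℝ, x (j-1) ≤ u → Real.exp (-u * s) ≤ Real.exp (-(x (j-1)) * s) := by
    intro u hu
    apply Real.exp_le_exp.mpr
    nlinarith [mul_le_mul_of_nonneg_right hu hs0]
  have hBl : Bl α (ε n) (x (j-1)) = Real.exp (-(x (j-1)) * s) := by rw [hsdef]; rfl
  have hd2 : d2f x (fun t => w t i) j
      = ((w (x (j+1)) i - w (x j) i) / (x (j+1) - x j)
        - (w (x j) i - w (x (j-1)) i) / (x j - x (j-1)))
        / (((x j - x (j-1)) + (x (j+1) - x j)) / 2) := rfl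
  have t1 : ε i * |d2f x (fun t => w t i) j| ≤ 2 * (M * κ * Real.exp (-(x (j-1)) * s)) := by
    rw [hd2]
    have h1 := mul_le_mul_of_nonneg_left hE hεi.le
    have h2 := hW2 η hηI
    have h3 := hexpa η hη.1.le
    have h4 : 0 ≤ M * κ := mul_nonneg hM0 hκ.le
    nlinarith [h1, h2, mul_le_mul_of_nonneg_left h3 h4]
  have t2 : ε i * |deriv (deriv (fun t => w t i)) (x j)|
      ≤ M * κ * Real.exp (-(x (j-1)) * s) := by
    have h2 := hW2 (x j) hbI
    have h3 := hexpa (x j) hab.le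
    have h4 : 0 ≤ M * κ := mul_nonneg hM0 hκ.le
    nlinarith [h2, mul_le_mul_of_nonneg_left h3 h4]
  rw [itd2, hBl]
  have habs : |d2f x (fun t => w t i) j - deriv (deriv (fun t => w t i)) (x j)|
      ≤ |d2f x (fun t => w t i) j| + |deriv (deriv (fun t => w t i)) (x j)| :=
    abs_sub _ _
  have hmul := mul_le_mul_of_nonneg_left habs hεi.le
  have he : (0:ℝ) < Real.exp (-(x (j-1)) * s) := Real.exp_pos _
  nlinarith [hmul, t1, t2, mul_pos hκ he]
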